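/- Let α ∈ [0,1], ρ > 0, and let a₀(n), a₁(n) be real sequences such that 2a₀(n)+a₁(n) = 1 for all n and (a₀(n)) is bounded. Then there exists a constant C > 0 such that for all n ≥ 2 and all x ∈ [0,1], |J_{n,α,ρ}^{M,1}((t−x)⁴;x)| ≤ C/n², where J_{n,α,ρ}^{M,1}((t−x)⁴;x) denotes the operator applied to the function t ↦ (t−x)⁴. -/

import Mathlib

open MeasureTheory Finset Filter

noncomputable def bin (m : ℕ) (j : ℤ) : ℝ :=
  if 0 ≤ j ∧ j ≤ (m : ℤ) then (m.choose j.toNat : ℝ) else 0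

/-- The α-Bernstein basis polynomial `p_{n,k}^α(x)` (with `k : ℤ`, vanishing out of range). -/
noncomputable def bp (α : ℝ) (n : ℕ) (k : ℤ) (x : ℝ) : ℝ :=
  if n = 1 then (if k = 0 then 1 - x else if k = 1 then x else 0)
  else
    (1 - α) * (bin (n - 2) k * x ^ k.toNat * (1 - x) ^ (n - 1 - k.toNat)
      + bin (n - 2) (k - 2) * x ^ (k.toNat - 1) * (1 - x) ^ (n - k.toNat))
    + α * bin n k * x ^ k.toNat * (1 - x) ^ (n - k.toNat)

/-- Euler Beta function. -/
noncomputable def betaFn (a b : ℝ) : ℝ := Real.Gamma a * Real.Gamma b / Real.Gamma (a + b)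

/-- The Pălțănea kernel `μ_{n,k}^ρ(t)`. -/
noncomputable def pal (ρ : ℝ) (n k : ℕ) (t : ℝ) : ℝ :=
  t ^ ((k : ℝ) * ρ) * (1 - t) ^ (((n : ℝ) - (k : ℝ)) * ρ)
    / betaFn ((k : ℝ) * ρ + 1) (((n : ℝ) - (k : ℝ)) * ρ + 1)

/-- First-order modified α-Bernstein–Pălțănea operator `J_{n,α,ρ}^{M,1}(f;x)`. -/
noncomputable def J1 (α ρ : ℝ) (a0 a1 : ℕ → ℝ) (n : ℕ) (f : ℝ → ℝ) (x : ℝ) : ℝ :=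
  ∑ k ∈ Finset.range (n + 1),
    ((a1 n * x + a0 n) * bp α (n - 1) (k : ℤ) x
      + (a1 n * (1 - x) + a0 n) * bp α (n - 1) ((k : ℤ) - 1) x)
    * ∫ t in (0:ℝ)..1, pal ρ n k t * f t



noncomputable def bern (m k : ℕ) (x : ℝ) : ℝ := (m.choose k : ℝ) * x^k * (1-x)^(m-k)

noncomputable def fallR (j : ℕ) (y : ℝ) : ℝ := ∏ i ∈ range j, (y - (i:ℝ))

lemma bern_nonneg {m k : ℕ} {x : ℝ} (hx : x ∈ Set.Icc (0:ℝ) 1) : 0 ≤ bern m k x := by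
  obtain ⟨h0, h1⟩ := hx
  have : (0:ℝ) ≤ 1 - x := by linarith
  unfold bern; positivity

lemma bern_sum (m : ℕ) (x : ℝ) : ∑ k ∈ range (m+1), bern m k x = 1 := by
  have := add_pow x (1-x) m
  simp only [show x + (1-x) = 1 by ring, one_pow] at this
  rw [eq_comm, this]
  exact Finset.sum_congr rfl (fun k _ => by unfold bern; ring)

lemma fallR_succ (j : ℕ) (y : ℝ) : fallR (j+1) y = y * fallR j (y-1) := by
  unfold fallR
  rw [Finset.prod_range_succ']
  simp only [Nat.cast_add, Nat.cast_one, Nat.cast_zero, sub_zero]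
  rw [mul_comm]
  congr 1
  exact Finset.prod_congr rfl (fun i _ => by push_cast; ring)

lemma fall_sum (j : ℕ) : ∀ (m : ℕ) (x : ℝ),
    ∑ k ∈ range (m+1), bern m k x * fallR j (k:ℝ) = fallR j (m:ℝ) * x^j := by
  induction j with
  | zero => intro m x; simp [fallR, bern_sum]
  | succ j ih =>
    intro m x
    rcases m with _ | M
    · simp [fallR_succ, bern]
    · rw [Finset.sum_range_succ']
      have h0 : bern (M+1) 0 x * fallR (j+1) ((0:ℕ):ℝ) = 0 := by
        simp [fallR_succ]
      rw [h0, add_zero]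
      have hterm : ∀ i : ℕ, i ∈ range (M+1) →
          bern (M+1) (i+1) x * fallR (j+1) ((i+1:ℕ):ℝ)
          = ((M:ℝ)+1) * x * (bern M i x * fallR j (i:ℝ)) := by
        intro i _
        have hc : ((M+1 : ℕ) : ℝ) * ((M.choose i : ℕ) : ℝ)
            = ((Nat.choose (M+1) (i+1) : ℕ) : ℝ) * ((i+1 : ℕ) : ℝ) := by
          exact_mod_cast congrArg (Nat.cast (R := ℝ)) (Nat.add_one_mul_choose_eq M i)
        rw [fallR_succ]
        have hcast : ((i+1:ℕ):ℝ) - 1 = (i:ℝ) := by push_cast; ring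
        rw [hcast]
        unfold bern
        have hsub : M + 1 - (i+1) = M - i := by omega
        rw [hsub]
        push_cast at hc ⊢
        linear_combination (-(x^(i+1) * (1-x)^(M-i) * fallR j (i:ℝ))) * hc
      rw [Finset.sum_congr rfl hterm, ← Finset.mul_sum, ih M x, fallR_succ]
      have : ((M+1:ℕ):ℝ) - 1 = (M:ℝ) := by push_cast; ring
      push_cast
      ring

lemma pow4_add_le (a d : ℝ) : (a + d)^4 ≤ 8*a^4 + 8*d^4 := by
  nlinarith [sq_nonneg (a-d), sq_nonneg (a+d), sq_nonneg (a^2-d^2), sq_nonneg (a^2+d^2), sq_nonneg (a*d)]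

lemma bern_central4 (m : ℕ) (x : ℝ) (hx : x ∈ Set.Icc (0:ℝ) 1) :
    ∑ k ∈ range (m+1), bern m k x * ((k:ℝ) - m*x)^4 ≤ (m:ℝ)^2 + m := by
  have E0 := fall_sum 0 m x
  have E1 := fall_sum 1 m x
  have E2 := fall_sum 2 m x
  have E3 := fall_sum 3 m x
  have E4 := fall_sum 4 m x
  have key : ∑ k ∈ range (m+1), bern m k x * ((k:ℝ) - m*x)^4
      = ∑ k ∈ range (m+1), (bern m k x * fallR 4 (k:ℝ)
        + (6 - 4*((m:ℝ)*x)) * (bern m k x * fallR 3 (k:ℝ))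
        + (7 - 12*((m:ℝ)*x) + 6*((m:ℝ)*x)^2) * (bern m k x * fallR 2 (k:ℝ))
        + (1 - 4*((m:ℝ)*x) + 6*((m:ℝ)*x)^2 - 4*((m:ℝ)*x)^3) * (bern m k x * fallR 1 (k:ℝ))
        + ((m:ℝ)*x)^4 * (bern m k x * fallR 0 (k:ℝ))) := by
    refine Finset.sum_congr rfl (fun k _ => ?_)
    simp only [fallR, Finset.prod_range_succ, Finset.prod_range_zero]
    push_cast
    ring
  rw [key]
  simp only [Finset.sum_add_distrib, ← Finset.mul_sum]
  rw [E0, E1, E2, E3, E4]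
  simp only [fallR, Finset.prod_range_succ, Finset.prod_range_zero]
  obtain ⟨h0, h1⟩ := hx
  have hX : 0 ≤ x*(1-x) := by nlinarith
  have hX4 : x*(1-x) ≤ 1/4 := by nlinarith [sq_nonneg (1-2*x)]
  have hm : (0:ℝ) ≤ m := Nat.cast_nonneg m
  push_cast
  ring_nf
  nlinarith [sq_nonneg ((m:ℝ)*(x*(1-x))), mul_nonneg hm hX, sq_nonneg ((m:ℝ)-1),
    mul_nonneg (mul_nonneg hm hm) hX, mul_nonneg (mul_nonneg hm hX) hX,
    mul_nonneg (mul_nonneg (mul_nonneg hm hm) hX) hX]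

lemma bern_shift4 (m : ℕ) (x d : ℝ) (hx : x ∈ Set.Icc (0:ℝ) 1) (hd : |d| ≤ 3) :
    ∑ k ∈ range (m+1), bern m k x * ((k:ℝ) - m*x + d)^4 ≤ 8*((m:ℝ)^2 + m) + 648 := by
  have hd4 : d^4 ≤ 81 := by
    have := abs_nonneg d
    have h2 : d^2 ≤ 9 := by nlinarith [sq_abs d]
    nlinarith [sq_nonneg d]
  have step : ∑ k ∈ range (m+1), bern m k x * ((k:ℝ) - m*x + d)^4
      ≤ ∑ k ∈ range (m+1), (8 * (bern m k x * ((k:ℝ) - m*x)^4) + 648 * bern m k x) := by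
    refine Finset.sum_le_sum (fun k _ => ?_)
    have hb := bern_nonneg (m := m) (k := k) hx
    have := pow4_add_le ((k:ℝ) - m*x) d
    nlinarith [mul_le_mul_of_nonneg_left this hb]
  refine step.trans ?_
  simp only [Finset.sum_add_distrib, ← Finset.mul_sum]
  rw [bern_sum]
  have := bern_central4 m x hx
  linarith




lemma bin_of_le {m k : ℕ} (hk : k ≤ m) : bin m (k:ℤ) = (m.choose k : ℝ) := by
  unfold bin
  rw [if_pos ⟨Int.natCast_nonneg k, by exact_mod_cast hk⟩, Int.toNat_natCast]

lemma bin_of_gt {m k : ℕ} (hk : m < k) : bin m (k:ℤ) = 0 := by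
  unfold bin
  rw [if_neg]; rintro ⟨-, h⟩; exact absurd (by exact_mod_cast h) (not_le.mpr hk)

lemma bin_of_neg {m : ℕ} {j : ℤ} (hj : j < 0) : bin m j = 0 := by
  unfold bin
  rw [if_neg]; rintro ⟨h, -⟩; omega

lemma bin_nonneg (m : ℕ) (j : ℤ) : 0 ≤ bin m j := by
  unfold bin; split <;> positivity

lemma bp_nonneg {α x : ℝ} (hα : α ∈ Set.Icc (0:ℝ) 1) (hx : x ∈ Set.Icc (0:ℝ) 1)
    (m : ℕ) (k : ℤ) : 0 ≤ bp α m k x := by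
  obtain ⟨ha0, ha1⟩ := hα
  obtain ⟨hx0, hx1⟩ := hx
  have h1x : (0:ℝ) ≤ 1 - x := by linarith
  have h1a : (0:ℝ) ≤ 1 - α := by linarith
  unfold bp
  split
  · split
    · linarith
    · split
      · linarith
      · exact le_refl 0
  · have b1 := bin_nonneg (m-2) k
    have b2 := bin_nonneg (m-2) (k-2)
    have b3 := bin_nonneg m k
    exact add_nonneg (mul_nonneg h1a (add_nonneg
      (mul_nonneg (mul_nonneg b1 (pow_nonneg hx0 _)) (pow_nonneg h1x _))
      (mul_nonneg (mul_nonneg b2 (pow_nonneg hx0 _)) (pow_nonneg h1x _))))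
      (mul_nonneg (mul_nonneg (mul_nonneg ha0 b3) (pow_nonneg hx0 _)) (pow_nonneg h1x _))

lemma bin_of_gt' {m : ℕ} {j : ℤ} (h : (m:ℤ) < j) : bin m j = 0 := by
  unfold bin
  rw [if_neg]; rintro ⟨-, h2⟩; omega

lemma bp_neg_one (α x : ℝ) (m : ℕ) : bp α m (-1) x = 0 := by
  unfold bp
  split
  · norm_num
  · rw [bin_of_neg (show (-1:ℤ) < 0 by norm_num),
      bin_of_neg (show (-1:ℤ)-2 < 0 by norm_num),
      bin_of_neg (show (-1:ℤ) < 0 by norm_num)]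
    ring

lemma bp_top (α x : ℝ) (m : ℕ) : bp α m ((m:ℤ)+1) x = 0 := by
  unfold bp
  split
  · rename_i h; subst h; norm_num
  · rename_i hm1
    have e1 : bin (m-2) ((m:ℤ)+1) = 0 := bin_of_gt' (by omega)
    have e2 : bin (m-2) ((m:ℤ)+1-2) = 0 := by
      by_cases hm0 : m = 0
      · exact bin_of_neg (by omega)
      · exact bin_of_gt' (by omega)
    have e3 : bin m ((m:ℤ)+1) = 0 := bin_of_gt' (by omega)
    rw [e1, e2, e3]
    ring

lemma bp_decomp (α x : ℝ) (m' : ℕ) (f : ℕ → ℝ) :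
    ∑ k ∈ range (m'+3), bp α (m'+2) (k:ℤ) x * f k
    = (1-α) * ((1-x) * ∑ j ∈ range (m'+1), bern m' j x * f j
             + x * ∑ j ∈ range (m'+1), bern m' j x * f (j+2))
    + α * ∑ k ∈ range (m'+3), bern (m'+2) k x * f k := by
  have key : ∀ k ∈ range (m'+3), bp α (m'+2) (k:ℤ) x * f k
      = (1-α) * (bin m' (k:ℤ) * x^k * (1-x)^(m'+1-k) * f k)
      + ((1-α) * (bin m' ((k:ℤ)-2) * x^(k-1) * (1-x)^(m'+2-k) * f k)
      + α * (bin (m'+2) (k:ℤ) * x^k * (1-x)^(m'+2-k) * f k)) := by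
    intro k _
    unfold bp
    rw [if_neg (by omega)]
    simp only [Nat.add_sub_cancel, Int.toNat_natCast,
      show m'+2-1 = m'+1 from by omega]
    ring
  rw [Finset.sum_congr rfl key, Finset.sum_add_distrib, Finset.sum_add_distrib,
    ← Finset.mul_sum, ← Finset.mul_sum, ← Finset.mul_sum]
  have S1 : ∑ k ∈ range (m'+3), (bin m' (k:ℤ) * x^k * (1-x)^(m'+1-k) * f k)
      = (1-x) * ∑ j ∈ range (m'+1), bern m' j x * f j := by
    rw [← Finset.sum_subset (Finset.range_subset_range.mpr (by omega : m'+1 ≤ m'+3))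
      (fun k _ hk => by
        have h1 : ¬ k < m'+1 := fun h => hk (Finset.mem_range.mpr h)
        rw [bin_of_gt (by omega)]
        ring)]
    rw [Finset.mul_sum]
    refine Finset.sum_congr rfl (fun j hj => ?_)
    have hjm : j ≤ m' := by simpa [Nat.lt_succ_iff] using hj
    rw [bin_of_le hjm, show m'+1-j = (m'-j)+1 from by omega, pow_succ]
    unfold bern; ring
  have S2 : ∑ k ∈ range (m'+3), (bin m' ((k:ℤ)-2) * x^(k-1) * (1-x)^(m'+2-k) * f k)
      = x * ∑ j ∈ range (m'+1), bern m' j x * f (j+2) := by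
    rw [Finset.sum_range_succ', Finset.sum_range_succ']
    have hb0 : bin m' (((0:ℕ):ℤ) - 2) = 0 := bin_of_neg (by norm_num)
    have hb1 : bin m' ((((0:ℕ)+1:ℕ):ℤ) - 2) = 0 := bin_of_neg (by norm_num)
    rw [hb0, hb1]
    simp only [zero_mul, mul_zero, add_zero, zero_mul]
    rw [Finset.mul_sum]
    refine Finset.sum_congr rfl (fun j hj => ?_)
    have hjm : j ≤ m' := by simpa [Nat.lt_succ_iff] using hj
    rw [show ((j+1+1:ℕ):ℤ)-2 = (j:ℤ) from by push_cast; ring, bin_of_le hjm,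
      show m'+2-(j+1+1) = m'-j from by omega, show j+1+1-1 = j+1 from by omega, pow_succ]
    unfold bern; ring
  have S3 : ∑ k ∈ range (m'+3), (bin (m'+2) (k:ℤ) * x^k * (1-x)^(m'+2-k) * f k)
      = ∑ k ∈ range (m'+3), bern (m'+2) k x * f k := by
    refine Finset.sum_congr rfl (fun k hk => ?_)
    have : k ≤ m'+2 := by simpa [Nat.lt_succ_iff] using hk
    rw [bin_of_le this]
    unfold bern; ring
  rw [S1, S2, S3]
  ring

lemma bp_sum_one {α x : ℝ} (m : ℕ) (hm : 1 ≤ m) :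
    ∑ k ∈ range (m+1), bp α m (k:ℤ) x = 1 := by
  rcases m with _ | _ | m'
  · omega
  · show ∑ k ∈ range 2, bp α 1 (k:ℤ) x = 1
    rw [Finset.sum_range_succ, Finset.sum_range_succ, Finset.sum_range_zero]
    unfold bp
    norm_num
  · have := bp_decomp α x m' (fun _ => 1)
    simp only [mul_one] at this
    calc ∑ k ∈ range (m'+2+1), bp α (m'+2) (k:ℤ) x
        = ∑ k ∈ range (m'+3), bp α (m'+2) (k:ℤ) x * (fun (_:ℕ) => (1:ℝ)) k := by
          refine Finset.sum_congr (by norm_num) (fun k _ => by simp)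
      _ = 1 := by
          rw [bp_decomp α x m' (fun _ => 1)]
          simp only [mul_one, bern_sum]
          ring

lemma bp_master {α x : ℝ} (hα : α ∈ Set.Icc (0:ℝ) 1) (hx : x ∈ Set.Icc (0:ℝ) 1)
    (m : ℕ) (hm : 1 ≤ m) (c : ℝ) (hc : |c| ≤ 1) :
    ∑ k ∈ range (m+1), bp α m (k:ℤ) x * ((k:ℝ) - (m:ℝ)*x + c)^4 ≤ 665*(m:ℝ)^2 := by
  obtain ⟨hx0, hx1⟩ := hx
  obtain ⟨ha0, ha1⟩ := hα
  obtain ⟨hcl, hcr⟩ := abs_le.mp hc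
  rcases m with _ | _ | m'
  · omega
  · show ∑ k ∈ range 2, bp α 1 (k:ℤ) x * ((k:ℝ) - ((1:ℕ):ℝ)*x + c)^4 ≤ 665*((1:ℕ):ℝ)^2
    rw [Finset.sum_range_succ, Finset.sum_range_succ, Finset.sum_range_zero]
    unfold bp
    norm_num
    have h1 : (-x+c)^4 ≤ 16 := by
      have h4 : (-x+c)^2 ≤ 4 := by nlinarith
      nlinarith [sq_nonneg (-x+c), h4]
    have h2 : (1-x+c)^4 ≤ 16 := by
      have h4 : (1-x+c)^2 ≤ 4 := by nlinarith
      nlinarith [sq_nonneg (1-x+c), h4]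
    nlinarith [mul_le_mul_of_nonneg_left h1 (by linarith : (0:ℝ) ≤ 1-x),
      mul_le_mul_of_nonneg_left h2 hx0]
  · have hxm : x ∈ Set.Icc (0:ℝ) 1 := ⟨hx0, hx1⟩
    set M : ℝ := ((m'+2:ℕ):ℝ) with hM
    have hMv : M = (m':ℝ) + 2 := by rw [hM]; push_cast; ring
    set f : ℕ → ℝ := fun k => ((k:ℝ) - M*x + c)^4 with hf
    have hgoal : ∑ k ∈ range (m'+1+1+1), bp α (m'+1+1) (k:ℤ) x * ((k:ℝ) - ((m'+1+1:ℕ):ℝ)*x + c)^4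
        = ∑ k ∈ range (m'+3), bp α (m'+2) (k:ℤ) x * f k := by
      have hcast : ((m'+1+1:ℕ):ℝ) = M := by rw [hM]
      refine Finset.sum_congr (by norm_num) (fun k _ => ?_)
      rw [hf, hcast]
    rw [hgoal, bp_decomp α x m' f]
    set T : ℝ := 8*(M^2 + M) + 648 with hT
    have hS1 : ∑ j ∈ range (m'+1), bern m' j x * f j ≤ T := by
      have heq : ∑ j ∈ range (m'+1), bern m' j x * f j
          = ∑ j ∈ range (m'+1), bern m' j x * ((j:ℝ) - (m':ℝ)*x + (c - 2*x))^4 := by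
        refine Finset.sum_congr rfl (fun j _ => ?_)
        rw [hf]
        congr 1
        rw [hMv]; ring
      rw [heq]
      refine (bern_shift4 m' x (c-2*x) hxm (abs_le.mpr ⟨by linarith, by linarith⟩)).trans ?_
      rw [hT, hMv]; nlinarith [(Nat.cast_nonneg m' : (0:ℝ) ≤ m')]
    have hS2 : ∑ j ∈ range (m'+1), bern m' j x * f (j+2) ≤ T := by
      have heq : ∑ j ∈ range (m'+1), bern m' j x * f (j+2)
          = ∑ j ∈ range (m'+1), bern m' j x * ((j:ℝ) - (m':ℝ)*x + (c + 2 - 2*x))^4 := by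
        refine Finset.sum_congr rfl (fun j _ => ?_)
        rw [hf]
        congr 1
        rw [hMv]; push_cast; ring
      rw [heq]
      refine (bern_shift4 m' x (c+2-2*x) hxm (abs_le.mpr ⟨by linarith, by linarith⟩)).trans ?_
      rw [hT, hMv]; nlinarith [(Nat.cast_nonneg m' : (0:ℝ) ≤ m')]
    have hS3 : ∑ k ∈ range (m'+3), bern (m'+2) k x * f k ≤ T := by
      have heq : ∑ k ∈ range (m'+3), bern (m'+2) k x * f k
          = ∑ k ∈ range (m'+2+1), bern (m'+2) k x * ((k:ℝ) - ((m'+2:ℕ):ℝ)*x + c)^4 := by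
        refine Finset.sum_congr (by norm_num) (fun k _ => by rw [hf, hM])
      rw [heq]
      refine (bern_shift4 (m'+2) x c hxm (abs_le.mpr ⟨by linarith, by linarith⟩)).trans ?_
      rw [hT, hM]
    have h1x : (0:ℝ) ≤ 1 - x := by linarith
    have h1a : (0:ℝ) ≤ 1 - α := by linarith
    have e3 : (1-x) * (∑ j ∈ range (m'+1), bern m' j x * f j)
        + x * (∑ j ∈ range (m'+1), bern m' j x * f (j+2)) ≤ T := by
      nlinarith [mul_le_mul_of_nonneg_left hS1 h1x, mul_le_mul_of_nonneg_left hS2 hx0]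
    have e4 := mul_le_mul_of_nonneg_left e3 h1a
    have e5 := mul_le_mul_of_nonneg_left hS3 ha0
    have hMn : (2:ℝ) ≤ M := by rw [hMv]; have : (0:ℝ) ≤ m' := Nat.cast_nonneg m'; linarith
    have hfin : T ≤ 665*M^2 := by rw [hT]; nlinarith [sq_nonneg (M-2)]
    nlinarith [e4, e5, hfin]




lemma beta_integral (a b : ℝ) (ha : 0 < a) (hb : 0 < b) :
    ∫ t in (0:ℝ)..1, t ^ (a - 1) * (1 - t) ^ (b - 1) = betaFn a b := by
  have key := Complex.Gamma_mul_Gamma_eq_betaIntegral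
      (s := (a:ℂ)) (t := (b:ℂ)) (by simpa using ha) (by simpa using hb)
  have hre : Complex.betaIntegral (a:ℂ) (b:ℂ)
      = ((∫ t in (0:ℝ)..1, t ^ (a - 1) * (1 - t) ^ (b - 1) : ℝ) : ℂ) := by
    rw [Complex.betaIntegral, ← intervalIntegral.integral_ofReal]
    refine intervalIntegral.integral_congr (fun x hx => ?_)
    rw [Set.uIcc_of_le (by norm_num : (0:ℝ) ≤ 1)] at hx
    push_cast
    rw [Complex.ofReal_cpow hx.1, Complex.ofReal_cpow (by linarith [hx.2] : (0:ℝ) ≤ 1 - x)]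
    push_cast
    ring
  rw [hre, ← Complex.ofReal_add, Complex.Gamma_ofReal, Complex.Gamma_ofReal,
    Complex.Gamma_ofReal, ← Complex.ofReal_mul, ← Complex.ofReal_mul] at key
  have : Real.Gamma a * Real.Gamma b
      = Real.Gamma (a + b) * ∫ t in (0:ℝ)..1, t ^ (a - 1) * (1 - t) ^ (b - 1) := by
    exact_mod_cast key
  have hG : Real.Gamma (a + b) ≠ 0 := (Real.Gamma_pos_of_pos (by linarith)).ne'
  unfold betaFn
  field_simp
  linarith [this]


set_option maxHeartbeats 2000000 in
lemma mu4_le (A B : ℝ) (hA : 1 ≤ A) (hB : 1 ≤ B) :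
    A*(A+1)*(A+2)*(A+3)/((A+B)*(A+B+1)*(A+B+2)*(A+B+3))
      - 4*(A/(A+B))*(A*(A+1)*(A+2)/((A+B)*(A+B+1)*(A+B+2)))
      + 6*(A/(A+B))^2*(A*(A+1)/((A+B)*(A+B+1)))
      - 3*(A/(A+B))^4 ≤ 3/(A+B)^2 := by
  obtain ⟨u, hu, rfl⟩ : ∃ u, 0 ≤ u ∧ A = 1 + u := ⟨A-1, by linarith, by ring⟩
  obtain ⟨v, hv, rfl⟩ : ∃ v, 0 ≤ v ∧ B = 1 + v := ⟨B-1, by linarith, by ring⟩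
  have hs : (0:ℝ) < 1 + u + (1 + v) := by linarith
  have hs1 : (0:ℝ) < 1 + u + (1 + v) + 1 := by linarith
  have hs2 : (0:ℝ) < 1 + u + (1 + v) + 2 := by linarith
  have hs3 : (0:ℝ) < 1 + u + (1 + v) + 3 := by linarith
  have hQ : (0:ℝ) ≤ 2832*u^0*v^0 + 7860*u^0*v^1 + 9192*u^0*v^2 + 5865*u^0*v^3 + 2208*u^0*v^4 + 492*u^0*v^5 + 60*u^0*v^6 + 3*u^0*v^7 + 7860*u^1*v^0 + 18384*u^1*v^1 + 17571*u^1*v^2 + 8760*u^1*v^3 + 2406*u^1*v^4 + 348*u^1*v^5 + 21*u^1*v^6 + 9192*u^2*v^0 + 17571*u^2*v^1 + 13152*u^2*v^2 + 4794*u^2*v^3 + 852*u^2*v^4 + 60*u^2*v^5 + 5865*u^3*v^0 + 8760*u^3*v^1 + 4794*u^3*v^2 + 1128*u^3*v^3 + 96*u^3*v^4 + 2208*u^4*v^0 + 2406*u^4*v^1 + 852*u^4*v^2 + 96*u^4*v^3 + 492*u^5*v^0 + 348*u^5*v^1 + 60*u^5*v^2 + 60*u^6*v^0 + 21*u^6*v^1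 + 3*u^7*v^0 := by
    repeat' apply add_nonneg
    all_goals exact mul_nonneg (mul_nonneg (by norm_num) (pow_nonneg hu _)) (pow_nonneg hv _)
  have hden : (0:ℝ) < (1 + u + (1 + v))^6 * (1 + u + (1 + v) + 1) * (1 + u + (1 + v) + 2)
      * (1 + u + (1 + v) + 3) := by positivity
  have key : 3/(1 + u + (1 + v))^2
      - ((1+u)*((1+u)+1)*((1+u)+2)*((1+u)+3)/((1 + u + (1 + v))*((1 + u + (1 + v))+1)*((1 + u + (1 + v))+2)*((1 + u + (1 + v))+3))
      - 4*((1+u)/(1 + u + (1 + v)))*((1+u)*((1+u)+1)*((1+u)+2)/((1 + u + (1 + v))*((1 + u + (1 + v))+1)*((1 + u + (1 + v))+2)))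
      + 6*((1+u)/(1 + u + (1 + v)))^2*((1+u)*((1+u)+1)/((1 + u + (1 + v))*((1 + u + (1 + v))+1)))
      - 3*((1+u)/(1 + u + (1 + v)))^4)
      = (2832*u^0*v^0 + 7860*u^0*v^1 + 9192*u^0*v^2 + 5865*u^0*v^3 + 2208*u^0*v^4 + 492*u^0*v^5 + 60*u^0*v^6 + 3*u^0*v^7 + 7860*u^1*v^0 + 18384*u^1*v^1 + 17571*u^1*v^2 + 8760*u^1*v^3 + 2406*u^1*v^4 + 348*u^1*v^5 + 21*u^1*v^6 + 9192*u^2*v^0 + 17571*u^2*v^1 + 13152*u^2*v^2 + 4794*u^2*v^3 + 852*u^2*v^4 + 60*u^2*v^5 + 5865*u^3*v^0 + 8760*u^3*v^1 + 4794*u^3*v^2 + 1128*u^3*v^3 + 96*u^3*v^4 + 2208*u^4*v^0 + 2406*u^4*v^1 + 852*u^4*v^2 + 96*u^4*v^3 + 492*u^5*v^0 + 348*u^5*v^1 + 60*u^5*v^2 + 60*u^6*v^0 + 21*u^6*v^1 + 3*u^7*v^0) / ((1 + u + (1 + v))^6 * (1 + u + (1 + v) + 1) * (1 + u + (1 + v)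 + 2)
      * (1 + u + (1 + v) + 3)) := by
    field_simp
    ring
  have h2 : (0:ℝ) ≤ (2832*u^0*v^0 + 7860*u^0*v^1 + 9192*u^0*v^2 + 5865*u^0*v^3 + 2208*u^0*v^4 + 492*u^0*v^5 + 60*u^0*v^6 + 3*u^0*v^7 + 7860*u^1*v^0 + 18384*u^1*v^1 + 17571*u^1*v^2 + 8760*u^1*v^3 + 2406*u^1*v^4 + 348*u^1*v^5 + 21*u^1*v^6 + 9192*u^2*v^0 + 17571*u^2*v^1 + 13152*u^2*v^2 + 4794*u^2*v^3 + 852*u^2*v^4 + 60*u^2*v^5 + 5865*u^3*v^0 + 8760*u^3*v^1 + 4794*u^3*v^2 + 1128*u^3*v^3 + 96*u^3*v^4 + 2208*u^4*v^0 + 2406*u^4*v^1 + 852*u^4*v^2 + 96*u^4*v^3 + 492*u^5*v^0 + 348*u^5*v^1 + 60*u^5*v^2 + 60*u^6*v^0 + 21*u^6*v^1 + 3*u^7*v^0) / ((1 + u + (1 + v))^6 * (1 + u + (1 + v) + 1) * (1 + u + (1 + v) + 2)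
      * (1 + u + (1 + v) + 3)) := div_nonneg hQ hden.le
  linarith [key ▸ h2]




lemma betaFn_pos {a b : ℝ} (ha : 0 < a) (hb : 0 < b) : 0 < betaFn a b := by
  unfold betaFn
  have := Real.Gamma_pos_of_pos ha
  have := Real.Gamma_pos_of_pos hb
  have := Real.Gamma_pos_of_pos (by linarith : (0:ℝ) < a + b)
  positivity



lemma pow4_le_of_abs_le {a b : ℝ} (h : |a| ≤ b) : a^4 ≤ b^4 := by
  obtain ⟨h1, h2⟩ := abs_le.mp h
  have hb : 0 ≤ b := (abs_nonneg a).trans h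
  have hsq : a^2 ≤ b^2 := by nlinarith
  nlinarith [sq_nonneg a, sq_nonneg b]

lemma betaFn_succ (a b : ℝ) (ha : 0 < a) (hb : 0 < b) :
    betaFn (a+1) b = (a/(a+b)) * betaFn a b := by
  unfold betaFn
  rw [Real.Gamma_add_one ha.ne', show a+1+b = (a+b)+1 by ring,
    Real.Gamma_add_one (by positivity : (0:ℝ) < a+b).ne']
  have g1 := (Real.Gamma_pos_of_pos ha).ne'
  have g2 := (Real.Gamma_pos_of_pos hb).ne'
  have g3 := (Real.Gamma_pos_of_pos (by positivity : (0:ℝ) < a+b)).ne'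
  field_simp

lemma betaFn_ratio (a b : ℝ) (ha : 0 < a) (hb : 0 < b) (m : ℕ) :
    betaFn (a + m) b = (∏ j ∈ Finset.range m, ((a+j)/(a+b+j))) * betaFn a b := by
  induction m with
  | zero => simp
  | succ m ih =>
    have ham : 0 < a + m := by positivity
    rw [show a + ((m+1:ℕ):ℝ) = (a + m) + 1 by push_cast; ring, betaFn_succ _ _ ham hb, ih,
      Finset.prod_range_succ]
    ring

lemma rpow_cont {c : ℝ} (hc : 0 ≤ c) : Continuous fun t : ℝ => t ^ c :=
  Real.continuous_rpow_const hc

lemma pal_cont {ρ : ℝ} (hρ : 0 < ρ) {n k : ℕ} (hk : k ≤ n) : Continuous (pal ρ n k) := by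
  have h1 : (0:ℝ) ≤ (k:ℝ) * ρ := by positivity
  have h2 : (0:ℝ) ≤ ((n:ℝ) - (k:ℝ)) * ρ := by
    have : (k:ℝ) ≤ n := by exact_mod_cast hk
    have : (0:ℝ) ≤ (n:ℝ) - k := by linarith
    positivity
  unfold pal
  exact ((rpow_cont h1).mul ((rpow_cont h2).comp (continuous_const.sub continuous_id))).div_const _

lemma pal_nonneg {ρ : ℝ} (hρ : 0 < ρ) {n k : ℕ} (hk : k ≤ n) {t : ℝ}
    (ht : t ∈ Set.Icc (0:ℝ) 1) : 0 ≤ pal ρ n k t := by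
  obtain ⟨ht0, ht1⟩ := ht
  have hkn : (k:ℝ) ≤ n := by exact_mod_cast hk
  have hB : (0:ℝ) < betaFn ((k:ℝ)*ρ+1) (((n:ℝ)-(k:ℝ))*ρ+1) :=
    betaFn_pos (by positivity) (by nlinarith)
  unfold pal
  have := Real.rpow_nonneg ht0 ((k:ℝ)*ρ)
  have := Real.rpow_nonneg (by linarith : (0:ℝ) ≤ 1 - t) (((n:ℝ)-(k:ℝ))*ρ)
  positivity

lemma pal_moment {ρ : ℝ} (hρ : 0 < ρ) {n k : ℕ} (hk : k ≤ n) (m : ℕ) :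
    ∫ t in (0:ℝ)..1, pal ρ n k t * t^m
      = ∏ j ∈ Finset.range m, (((k:ℝ)*ρ+1+j) / ((k:ℝ)*ρ+1+(((n:ℝ)-(k:ℝ))*ρ+1)+j)) := by
  set A : ℝ := (k:ℝ)*ρ+1 with hA
  set B : ℝ := ((n:ℝ)-(k:ℝ))*ρ+1 with hB
  have hkn : (k:ℝ) ≤ n := by exact_mod_cast hk
  have hApos : 0 < A := by rw [hA]; positivity
  have hBpos : 0 < B := by rw [hB]; nlinarith
  have hbeta := betaFn_pos hApos hBpos
  have key : ∫ t in (0:ℝ)..1, pal ρ n k t * t^m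
      = ∫ t in (0:ℝ)..1, (t ^ (A + m - 1) * (1-t) ^ (B - 1)) / betaFn A B := by
    refine intervalIntegral.integral_congr_ae (MeasureTheory.ae_of_all _ (fun t ht => ?_))
    rw [Set.uIoc_of_le (by norm_num : (0:ℝ) ≤ 1)] at ht
    obtain ⟨ht0, ht1⟩ := ht
    unfold pal
    rw [← hA, ← hB]
    rw [show (A + m - 1) = ((k:ℝ)*ρ) + m from by rw [hA]; push_cast; ring,
      Real.rpow_add ht0, Real.rpow_natCast,
      show (B - 1) = (((n:ℝ)-(k:ℝ))*ρ) from by rw [hB]; ring]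
    ring
  rw [key, intervalIntegral.integral_div, beta_integral (A + m) B (by positivity) hBpos,
    betaFn_ratio A B hApos hBpos m]
  rw [mul_div_assoc, div_self hbeta.ne', mul_one]

lemma pal_total {ρ : ℝ} (hρ : 0 < ρ) {n k : ℕ} (hk : k ≤ n) :
    ∫ t in (0:ℝ)..1, pal ρ n k t = 1 := by
  have := pal_moment hρ hk 0
  simpa using this

set_option maxHeartbeats 1000000 in
lemma pal_quartic {ρ : ℝ} (hρ : 0 < ρ) {n k : ℕ} (hk : k ≤ n) (y : ℝ) :
    ∫ t in (0:ℝ)..1, pal ρ n k t * (t - y)^4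
      = (((k:ℝ)*ρ+1)/((k:ℝ)*ρ+1+(((n:ℝ)-(k:ℝ))*ρ+1)))
          * ((((k:ℝ)*ρ+1)+1)/(((k:ℝ)*ρ+1+(((n:ℝ)-(k:ℝ))*ρ+1))+1))
          * ((((k:ℝ)*ρ+1)+2)/(((k:ℝ)*ρ+1+(((n:ℝ)-(k:ℝ))*ρ+1))+2))
          * ((((k:ℝ)*ρ+1)+3)/(((k:ℝ)*ρ+1+(((n:ℝ)-(k:ℝ))*ρ+1))+3))
        - 4*y*((((k:ℝ)*ρ+1)/((k:ℝ)*ρ+1+(((n:ℝ)-(k:ℝ))*ρ+1)))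
          * ((((k:ℝ)*ρ+1)+1)/(((k:ℝ)*ρ+1+(((n:ℝ)-(k:ℝ))*ρ+1))+1))
          * ((((k:ℝ)*ρ+1)+2)/(((k:ℝ)*ρ+1+(((n:ℝ)-(k:ℝ))*ρ+1))+2)))
        + 6*y^2*((((k:ℝ)*ρ+1)/((k:ℝ)*ρ+1+(((n:ℝ)-(k:ℝ))*ρ+1)))
          * ((((k:ℝ)*ρ+1)+1)/(((k:ℝ)*ρ+1+(((n:ℝ)-(k:ℝ))*ρ+1))+1)))
        - 4*y^3*(((k:ℝ)*ρ+1)/((k:ℝ)*ρ+1+(((n:ℝ)-(k:ℝ))*ρ+1)))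
        + y^4 := by
  have Im : ∀ m:ℕ, IntervalIntegrable (fun t => pal ρ n k t * t^m) MeasureTheory.volume 0 1 :=
    fun m => ((pal_cont hρ hk).mul (continuous_pow m)).intervalIntegrable 0 1
  have hA1 := Im 4
  have hA2 := (Im 3).const_mul (4*y)
  have hA3 := (Im 2).const_mul (6*y^2)
  have hA4 := (Im 1).const_mul (4*y^3)
  have hA5 := (Im 0).const_mul (y^4)
  have key : ∫ t in (0:ℝ)..1, pal ρ n k t * (t - y)^4
      = ∫ t in (0:ℝ)..1, (pal ρ n k t * t^4 - 4*y*(pal ρ n k t * t^3)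
          + 6*y^2*(pal ρ n k t * t^2) - 4*y^3*(pal ρ n k t * t^1)
          + y^4*(pal ρ n k t * t^0)) := by
    refine intervalIntegral.integral_congr (fun t _ => ?_)
    ring
  rw [key,
    intervalIntegral.integral_add (((hA1.sub hA2).add hA3).sub hA4) hA5,
    intervalIntegral.integral_sub ((hA1.sub hA2).add hA3) hA4,
    intervalIntegral.integral_add (hA1.sub hA2) hA3,
    intervalIntegral.integral_sub hA1 hA2,
    intervalIntegral.integral_const_mul, intervalIntegral.integral_const_mul,
    intervalIntegral.integral_const_mul, intervalIntegral.integral_const_mul,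
    pal_moment hρ hk 4, pal_moment hρ hk 3, pal_moment hρ hk 2,
    pal_moment hρ hk 1, pal_moment hρ hk 0]
  simp only [Finset.prod_range_succ, Finset.prod_range_zero, one_mul,
    Nat.cast_ofNat, Nat.cast_one, Nat.cast_zero, add_zero]
  ring

set_option maxHeartbeats 1000000 in
lemma I_bound {ρ : ℝ} (hρ : 0 < ρ) {n k : ℕ} (hk : k ≤ n) (hn : 1 ≤ n) {x : ℝ}
    (hx : x ∈ Set.Icc (0:ℝ) 1) :
    0 ≤ ∫ t in (0:ℝ)..1, pal ρ n k t * (t - x)^4 ∧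
    ∫ t in (0:ℝ)..1, pal ρ n k t * (t - x)^4
      ≤ 64*((k:ℝ)/(n:ℝ) - x)^4 + 40/(ρ^2*(n:ℝ)^2) := by
  set A : ℝ := (k:ℝ)*ρ+1 with hA
  set B : ℝ := ((n:ℝ)-(k:ℝ))*ρ+1 with hB
  have hkn : (k:ℝ) ≤ n := by exact_mod_cast hk
  have hk0 : (0:ℝ) ≤ k := Nat.cast_nonneg k
  have hn1 : (1:ℝ) ≤ n := by exact_mod_cast hn
  have hA1 : 1 ≤ A := by rw [hA]; nlinarith
  have hB1 : 1 ≤ B := by rw [hB]; nlinarith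
  have hS : A + B = (n:ℝ)*ρ + 2 := by rw [hA, hB]; ring
  have hS2 : 2 ≤ A + B := by linarith
  have hSpos : 0 < A + B := by linarith
  have hnpos : (0:ℝ) < n := by linarith
  constructor
  · refine intervalIntegral.integral_nonneg (by norm_num) (fun t ht => ?_)
    exact mul_nonneg (pal_nonneg hρ hk ht) (by positivity)
  set μ : ℝ := A/(A+B) with hμ
  -- step 1 : pointwise bound and integral mono
  have hcont4 : ∀ y : ℝ, Continuous (fun t => pal ρ n k t * (t - y)^4) :=
    fun y => (pal_cont hρ hk).mul ((continuous_id.sub continuous_const).pow 4)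
  have step1 : ∫ t in (0:ℝ)..1, pal ρ n k t * (t - x)^4
      ≤ ∫ t in (0:ℝ)..1, (8*(pal ρ n k t * (t - μ)^4) + (8*(μ-x)^4)*pal ρ n k t) := by
    refine intervalIntegral.integral_mono_on (by norm_num)
      ((hcont4 x).intervalIntegrable 0 1)
      (((continuous_const.mul (hcont4 μ)).add (continuous_const.mul (pal_cont hρ hk))).intervalIntegrable 0 1)
      (fun t ht => ?_)
    have hp := pal_nonneg hρ hk ht
    have hq : (t - x)^4 ≤ 8*(t-μ)^4 + 8*(μ-x)^4 := by
      have := pow4_add_le (t-μ) (μ-x)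
      calc (t-x)^4 = ((t-μ)+(μ-x))^4 := by ring
        _ ≤ 8*(t-μ)^4 + 8*(μ-x)^4 := this
    nlinarith [mul_le_mul_of_nonneg_left hq hp]
  have step2 : ∫ t in (0:ℝ)..1, (8*(pal ρ n k t * (t - μ)^4) + (8*(μ-x)^4)*pal ρ n k t)
      = 8*(∫ t in (0:ℝ)..1, pal ρ n k t * (t - μ)^4) + (8*(μ-x)^4) := by
    rw [intervalIntegral.integral_add (((hcont4 μ).intervalIntegrable 0 1).const_mul 8)
        (((pal_cont hρ hk).intervalIntegrable 0 1).const_mul (8*(μ-x)^4)),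
      intervalIntegral.integral_const_mul, intervalIntegral.integral_const_mul,
      pal_total hρ hk, mul_one]
  have step3 : ∫ t in (0:ℝ)..1, pal ρ n k t * (t - μ)^4 ≤ 3/(A+B)^2 := by
    rw [pal_quartic hρ hk μ]
    have hmu := mu4_le A B hA1 hB1
    have e : A/(A+B)*((A+1)/(A+B+1))*((A+2)/(A+B+2))*((A+3)/(A+B+3))
        - 4*μ*(A/(A+B)*((A+1)/(A+B+1))*((A+2)/(A+B+2)))
        + 6*μ^2*(A/(A+B)*((A+1)/(A+B+1)))
        - 4*μ^3*(A/(A+B)) + μ^4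
        = A*(A+1)*(A+2)*(A+3)/((A+B)*(A+B+1)*(A+B+2)*(A+B+3))
        - 4*(A/(A+B))*(A*(A+1)*(A+2)/((A+B)*(A+B+1)*(A+B+2)))
        + 6*(A/(A+B))^2*(A*(A+1)/((A+B)*(A+B+1)))
        - 3*(A/(A+B))^4 := by
      have d0 : (A+B) ≠ 0 := by linarith
      have d1 : (A+B+1) ≠ 0 := by linarith
      have d2 : (A+B+2) ≠ 0 := by linarith
      have d3 : (A+B+3) ≠ 0 := by linarith
      rw [hμ]
      field_simp
      ring
    rw [← hA, ← hB, e]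
    exact hmu
  -- step 4 : center distance
  have hc : μ - (k:ℝ)/n = ((n:ℝ)-2*k)/((A+B)*n) := by
    rw [hμ, hA, hS]
    field_simp
    ring
  have habs : |μ - (k:ℝ)/n| ≤ 1/(A+B) := by
    rw [hc, abs_div]
    rw [abs_of_pos (by positivity : (0:ℝ) < (A+B)*n)]
    rw [div_le_div_iff₀ (by positivity) (by positivity)]
    have : |(n:ℝ)-2*k| ≤ n := by
      rw [abs_le]; constructor <;> nlinarith
    nlinarith [this]
  have hstep4 : (μ - x)^4 ≤ 8*((k:ℝ)/n - x)^4 + 8*(1/(A+B))^4 := by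
    have h1 : (μ - x)^4 ≤ 8*((k:ℝ)/n - x)^4 + 8*(μ - (k:ℝ)/n)^4 := by
      have := pow4_add_le ((k:ℝ)/n - x) (μ - (k:ℝ)/n)
      calc (μ-x)^4 = (((k:ℝ)/n - x) + (μ - (k:ℝ)/n))^4 := by ring
        _ ≤ _ := this
    have h2 : (μ - (k:ℝ)/n)^4 ≤ (1/(A+B))^4 := pow4_le_of_abs_le habs
    linarith
  -- assemble
  have hS4 : (1/(A+B))^4 ≤ (1/4)*(1/(A+B)^2) := by
    rw [div_pow, one_pow, div_mul_div_comm, one_mul,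
      div_le_div_iff₀ (by positivity) (by positivity)]
    have h4 : 4 ≤ (A+B)^2 := by nlinarith
    nlinarith [mul_le_mul_of_nonneg_right h4 (sq_nonneg (A+B))]
  have hfin : (40:ℝ)/(A+B)^2 ≤ 40/(ρ^2*(n:ℝ)^2) := by
    rw [div_le_div_iff₀ (by positivity) (by positivity)]
    have hrn : ρ*(n:ℝ) ≤ A+B := by rw [hS]; nlinarith
    nlinarith [mul_pos hρ hnpos]
  calc ∫ t in (0:ℝ)..1, pal ρ n k t * (t - x)^4
      ≤ 8*(∫ t in (0:ℝ)..1, pal ρ n k t * (t - μ)^4) + (8*(μ-x)^4) := by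
        rw [← step2]; exact step1
    _ ≤ 8*(3/(A+B)^2) + 8*(8*((k:ℝ)/n - x)^4 + 8*(1/(A+B))^4) := by
        nlinarith [step3, hstep4]
    _ ≤ 64*((k:ℝ)/(n:ℝ) - x)^4 + 40/(ρ^2*(n:ℝ)^2) := by
        have e1 : 8*(3/(A+B)^2) = 24*(1/(A+B)^2) := by ring
        have e2 : (40:ℝ)/(A+B)^2 = 24*(1/(A+B)^2) + 16*(1/(A+B)^2) := by ring
        nlinarith [hS4, hfin]

lemma sum_bp_main {α x : ℝ} (hα : α ∈ Set.Icc (0:ℝ) 1) (hx : x ∈ Set.Icc (0:ℝ) 1)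
    (m n : ℕ) (hm : 1 ≤ m) (hnm : (n:ℝ) = (m:ℝ)+1) (δ : ℝ) (hδ0 : 0 ≤ δ) (hδ1 : δ ≤ 1)
    (E : ℝ) (hE : 0 ≤ E) :
    ∑ k ∈ Finset.range (m+1), bp α m (k:ℤ) x * (64*(((k:ℝ)+δ)/(n:ℝ) - x)^4 + E)
      ≤ 42560/(n:ℝ)^2 + E := by
  have hm0 : (0:ℝ) ≤ m := Nat.cast_nonneg m
  have hn0 : (0:ℝ) < n := by rw [hnm]; linarith
  have hptw : ∀ k : ℕ, (((k:ℝ)+δ)/(n:ℝ) - x)^4 = ((k:ℝ) - (m:ℝ)*x + (δ - x))^4 / (n:ℝ)^4 := by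
    intro k
    rw [← div_pow]
    congr 1
    rw [hnm]
    field_simp
    ring
  have key : ∑ k ∈ Finset.range (m+1), bp α m (k:ℤ) x * (64*(((k:ℝ)+δ)/(n:ℝ) - x)^4 + E)
      = (64/(n:ℝ)^4) * (∑ k ∈ Finset.range (m+1), bp α m (k:ℤ) x * ((k:ℝ) - (m:ℝ)*x + (δ - x))^4)
        + E * ∑ k ∈ Finset.range (m+1), bp α m (k:ℤ) x := by
    rw [Finset.mul_sum, Finset.mul_sum, ← Finset.sum_add_distrib]
    refine Finset.sum_congr rfl (fun k _ => ?_)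
    rw [hptw k]
    ring
  rw [key, bp_sum_one m hm, mul_one]
  have hmaster := bp_master hα hx m hm (δ - x)
    (abs_le.mpr ⟨by obtain ⟨h0,h1⟩ := hx; linarith, by obtain ⟨h0,h1⟩ := hx; linarith⟩)
  have h64 : (0:ℝ) ≤ 64/(n:ℝ)^4 := by positivity
  have step := mul_le_mul_of_nonneg_left hmaster h64
  have hm2 : (m:ℝ)^2 ≤ (n:ℝ)^2 := by nlinarith [hnm]
  have final : (64/(n:ℝ)^4) * (665*(m:ℝ)^2) ≤ 42560/(n:ℝ)^2 := by
    rw [div_mul_eq_mul_div, div_le_div_iff₀ (by positivity) (by positivity)]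
    nlinarith [hm2, sq_nonneg ((n:ℝ))]
  linarith

theorem stmt_3 (α ρ : ℝ) (hα : α ∈ Set.Icc (0:ℝ) 1) (hρ : 0 < ρ)
    (a0 a1 : ℕ → ℝ) (hsum : ∀ n, 2 * a0 n + a1 n = 1)
    (hbdd : ∃ M : ℝ, ∀ n, |a0 n| ≤ M) :
    ∃ C > (0:ℝ), ∀ n : ℕ, 2 ≤ n → ∀ x ∈ Set.Icc (0:ℝ) 1,
      |J1 α ρ a0 a1 n (fun t => (t - x) ^ 4) x| ≤ C / (n : ℝ) ^ 2 := by
  obtain ⟨M, hM⟩ := hbdd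
  have hM0 : 0 ≤ M := (abs_nonneg _).trans (hM 0)
  set Amax : ℝ := 3*M+1 with hAmax
  have hAmax1 : 1 ≤ Amax := by rw [hAmax]; linarith
  have hApos : 0 < Amax := by linarith
  refine ⟨Amax*85120 + Amax*80/ρ^2, ?_, ?_⟩
  · have h1 : (0:ℝ) < Amax*85120 := by nlinarith
    have h2 : (0:ℝ) ≤ Amax*80/ρ^2 := by positivity
    linarith
  intro n hn2 x hx
  obtain ⟨m, rfl⟩ : ∃ m, n = m+1 := ⟨n-1, by omega⟩
  have hm1 : 1 ≤ m := by omega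
  have hmsub : m+1-1 = m := by omega
  have hnm : ((m+1:ℕ):ℝ) = (m:ℝ)+1 := by push_cast; ring
  have hn1 : 1 ≤ m+1 := by omega
  have hn0 : (0:ℝ) < ((m+1:ℕ):ℝ) := by rw [hnm]; positivity
  set n := m+1
  set I : ℕ → ℝ := fun k => ∫ t in (0:ℝ)..1, pal ρ n k t * (t - x)^4 with hI
  set E : ℝ := 40/(ρ^2*(n:ℝ)^2) with hE
  have hEnn : 0 ≤ E := by rw [hE]; positivity
  have hIb : ∀ k : ℕ, k ≤ n → 0 ≤ I k ∧ I k ≤ 64*((k:ℝ)/(n:ℝ) - x)^4 + E :=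
    fun k hk => I_bound hρ hk hn1 hx
  -- rewrite J1
  have hJ : J1 α ρ a0 a1 n (fun t => (t - x) ^ 4) x
      = ∑ k ∈ Finset.range (n+1),
        ((a1 n * x + a0 n) * bp α m (k:ℤ) x
          + (a1 n * (1 - x) + a0 n) * bp α m ((k:ℤ) - 1) x) * I k := by
    unfold J1
    rw [hmsub]
  -- coefficient bounds
  have ha1 : a1 n = 1 - 2 * a0 n := by have := hsum n; linarith
  obtain ⟨hx0, hx1⟩ := hx
  obtain ⟨haM, haM'⟩ := abs_le.mp (hM n)
  have hc1 : |a1 n * x + a0 n| ≤ Amax := by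
    rw [ha1, hAmax, abs_le]; constructor <;> nlinarith
  have hc2 : |a1 n * (1-x) + a0 n| ≤ Amax := by
    rw [ha1, hAmax, abs_le]; constructor <;> nlinarith
  have hxI : x ∈ Set.Icc (0:ℝ) 1 := ⟨hx0, hx1⟩
  -- step A : abs bound
  have stepA : |J1 α ρ a0 a1 n (fun t => (t - x) ^ 4) x|
      ≤ Amax * (∑ k ∈ Finset.range (n+1), bp α m (k:ℤ) x * I k)
        + Amax * (∑ k ∈ Finset.range (n+1), bp α m ((k:ℤ)-1) x * I k) := by
    rw [hJ]
    refine (Finset.abs_sum_le_sum_abs _ _).trans ?_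
    rw [Finset.mul_sum, Finset.mul_sum, ← Finset.sum_add_distrib]
    refine Finset.sum_le_sum (fun k hk => ?_)
    have hkn : k ≤ n := by simpa [Nat.lt_succ_iff] using hk
    have hIk := (hIb k hkn).1
    have hb1 := bp_nonneg hα hxI m (k:ℤ)
    have hb2 := bp_nonneg hα hxI m ((k:ℤ)-1)
    rw [abs_mul, abs_of_nonneg hIk]
    have habs : |(a1 n * x + a0 n) * bp α m (k:ℤ) x
        + (a1 n * (1 - x) + a0 n) * bp α m ((k:ℤ) - 1) x|
        ≤ Amax * bp α m (k:ℤ) x + Amax * bp α m ((k:ℤ)-1) x := by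
      refine (abs_add_le _ _).trans ?_
      rw [abs_mul, abs_mul, abs_of_nonneg hb1, abs_of_nonneg hb2]
      have e1 := mul_le_mul_of_nonneg_right hc1 hb1
      have e2 := mul_le_mul_of_nonneg_right hc2 hb2
      linarith
    nlinarith [mul_le_mul_of_nonneg_right habs hIk]
  -- sum A bound
  have hSumA : ∑ k ∈ Finset.range (n+1), bp α m (k:ℤ) x * I k ≤ 42560/(n:ℝ)^2 + E := by
    have h1 : ∑ k ∈ Finset.range (n+1), bp α m (k:ℤ) x * I k
        ≤ ∑ k ∈ Finset.range (n+1), bp α m (k:ℤ) x * (64*(((k:ℝ)+0)/(n:ℝ) - x)^4 + E) := by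
      refine Finset.sum_le_sum (fun k hk => ?_)
      have hkn : k ≤ n := by simpa [Nat.lt_succ_iff] using hk
      have := (hIb k hkn).2
      have hb := bp_nonneg hα hxI m (k:ℤ)
      rw [add_zero]
      exact mul_le_mul_of_nonneg_left this hb
    refine h1.trans ?_
    rw [Finset.sum_range_succ]
    have htop : bp α m ((n:ℕ):ℤ) x = 0 := by
      have : ((n:ℕ):ℤ) = (m:ℤ)+1 := by simp [n]
      rw [this]
      exact bp_top α x m
    rw [htop, zero_mul, add_zero]
    exact sum_bp_main hα hxI m n hm1 hnm 0 le_rfl zero_le_one E hEnn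
  -- sum B bound
  have hSumB : ∑ k ∈ Finset.range (n+1), bp α m ((k:ℤ)-1) x * I k ≤ 42560/(n:ℝ)^2 + E := by
    rw [Finset.sum_range_succ']
    have hz : bp α m (((0:ℕ):ℤ)-1) x * I 0 = 0 := by
      rw [show ((0:ℕ):ℤ)-1 = (-1:ℤ) from by norm_num, bp_neg_one, zero_mul]
    rw [hz, add_zero]
    have h1 : ∑ j ∈ Finset.range n, bp α m (((j+1:ℕ):ℤ)-1) x * I (j+1)
        ≤ ∑ j ∈ Finset.range (m+1), bp α m (j:ℤ) x * (64*(((j:ℝ)+1)/(n:ℝ) - x)^4 + E) := by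
      refine Finset.sum_le_sum (fun j hj => ?_)
      have hjn : j+1 ≤ n := by have := Finset.mem_range.mp hj; omega
      have hcast : ((j+1:ℕ):ℤ)-1 = (j:ℤ) := by push_cast; ring
      rw [hcast]
      have hb := bp_nonneg hα hxI m (j:ℤ)
      have h2 := (hIb (j+1) hjn).2
      have hcast2 : ((j+1:ℕ):ℝ) = (j:ℝ)+1 := by push_cast; ring
      rw [hcast2] at h2
      exact mul_le_mul_of_nonneg_left h2 hb
    exact h1.trans (sum_bp_main hα hxI m n hm1 hnm 1 zero_le_one le_rfl E hEnn)
  -- combine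
  have total : |J1 α ρ a0 a1 n (fun t => (t - x) ^ 4) x|
      ≤ Amax * (42560/(n:ℝ)^2 + E) + Amax * (42560/(n:ℝ)^2 + E) := by
    have e1 := mul_le_mul_of_nonneg_left hSumA hApos.le
    have e2 := mul_le_mul_of_nonneg_left hSumB hApos.le
    refine stepA.trans ?_
    linarith
  have heq : Amax * (42560/(n:ℝ)^2 + E) + Amax * (42560/(n:ℝ)^2 + E)
      = (Amax*85120 + Amax*80/ρ^2)/(n:ℝ)^2 := by
    rw [hE]
    have hρ0 : ρ ≠ 0 := hρ.ne'
    have hn0' : ((n:ℕ):ℝ) ≠ 0 := hn0.ne'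
    field_simp
    ring
  exact heq ▸ total
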